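/- arXiv:1203.4956 — 4 statements merged into one kernel-verified Lean document; each statement's English description precedes it below -/
import Mathlib

section
/- Let n, m ≥ 1 be integers and let τₙ : Mₙ(ℂ) → Mₙ(ℂ) denote the transpose map. Then the operator norm of τₙ ⊗ id_{Mₘ} : Mₙ(ℂ) ⊗ Mₘ(ℂ) → Mₙ(ℂ) ⊗ Mₘ(ℂ) (with respect to the C*-norms) equals min(m, n). -/
open scoped Kronecker
open Matrix
open scoped Matrix.Norms.L2Operator

set_option linter.unusedSectionVars false
set_option maxHeartbeats 1000000

namespace Stmt0Aux

/-! ### Euclidean norm on plain vectors -/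

noncomputable def enorm {ι : Type*} [Fintype ι] [DecidableEq ι] (x : ι → ℂ) : ℝ :=
  ‖(EuclideanSpace.equiv ι ℂ).symm x‖

lemma enorm_nonneg {ι : Type*} [Fintype ι] [DecidableEq ι] (x : ι → ℂ) : 0 ≤ enorm x := norm_nonneg _

lemma enorm_eq {ι : Type*} [Fintype ι] [DecidableEq ι] (x : ι → ℂ) :
    enorm x = Real.sqrt (∑ i, ‖x i‖ ^ 2) := by simp [enorm, EuclideanSpace.norm_eq]

lemma enorm_sq {ι : Type*} [Fintype ι] [DecidableEq ι] (x : ι → ℂ) : enorm x ^ 2 = ∑ i, ‖x i‖ ^ 2 := by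
  rw [enorm_eq, Real.sq_sqrt (by positivity)]

lemma mulVec_enorm_le {ι κ : Type*} [Fintype ι] [Fintype κ] [DecidableEq ι] [DecidableEq κ]
    (A : Matrix ι κ ℂ) (x : κ → ℂ) :
    enorm (A *ᵥ x) ≤ ‖A‖ * enorm x :=
  A.l2_opNorm_mulVec ((EuclideanSpace.equiv κ ℂ).symm x)

lemma opNorm_le_of_mulVec {ι κ : Type*} [Fintype ι] [Fintype κ] [DecidableEq ι] [DecidableEq κ]
    {A : Matrix ι κ ℂ} {c : ℝ} (hc : 0 ≤ c)
    (h : ∀ x : κ → ℂ, enorm (A *ᵥ x) ≤ c * enorm x) : ‖A‖ ≤ c := by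
  rw [Matrix.l2_opNorm_def]
  exact ContinuousLinearMap.opNorm_le_bound _ hc fun x => h ((WithLp.equiv 2 _) x)

lemma star_dot_self {ι : Type*} [Fintype ι] [DecidableEq ι] (w : ι → ℂ) :
    star w ⬝ᵥ w = ((enorm w ^ 2 : ℝ) : ℂ) := by
  rw [enorm_sq]
  push_cast
  simp [dotProduct, RCLike.conj_mul]

lemma inner_mulVec_le {ι κ : Type*} [Fintype ι] [Fintype κ] [DecidableEq ι] [DecidableEq κ]
    (A : Matrix ι κ ℂ) (x : ι → ℂ) (y : κ → ℂ) :
    ‖star x ⬝ᵥ (A *ᵥ y)‖ ≤ ‖A‖ * enorm x * enorm y := by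
  have h1 : star x ⬝ᵥ (A *ᵥ y) =
      inner ℂ ((EuclideanSpace.equiv ι ℂ).symm x) ((EuclideanSpace.equiv ι ℂ).symm (A *ᵥ y)) := by
    rw [EuclideanSpace.inner_eq_star_dotProduct]; exact dotProduct_comm _ _
  rw [h1]
  calc _ ≤ ‖(EuclideanSpace.equiv ι ℂ).symm x‖ * ‖(EuclideanSpace.equiv ι ℂ).symm (A *ᵥ y)‖ :=
        norm_inner_le_norm _ _
    _ ≤ enorm x * (‖A‖ * enorm y) :=
        mul_le_mul_of_nonneg_left (mulVec_enorm_le A y) (norm_nonneg _)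
    _ = ‖A‖ * enorm x * enorm y := by ring

lemma opNorm_le_of_inner {ι κ : Type*} [Fintype ι] [Fintype κ] [DecidableEq ι] [DecidableEq κ]
    {A : Matrix ι κ ℂ} {c : ℝ} (hc : 0 ≤ c)
    (h : ∀ (x : ι → ℂ) (y : κ → ℂ), ‖star x ⬝ᵥ (A *ᵥ y)‖ ≤ c * enorm x * enorm y) :
    ‖A‖ ≤ c := by
  refine opNorm_le_of_mulVec hc fun y => ?_
  set w := A *ᵥ y with hw
  have h2 : enorm w ^ 2 ≤ c * enorm w * enorm y := by
    have := h w y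
    rw [← hw, star_dot_self] at this
    simpa using this
  rcases eq_or_lt_of_le (enorm_nonneg w) with h0 | h0
  · rw [← h0]; exact mul_nonneg hc (enorm_nonneg y)
  · nlinarith [enorm_nonneg y]

/-! ### block vectors and the partial transpose -/

variable {n m : ℕ}

def rowv (i : Fin n) (x : Fin n × Fin m → ℂ) : Fin m → ℂ := fun a => x (i, a)
def emb (j : Fin n) (v : Fin m → ℂ) : Fin n × Fin m → ℂ :=
  fun p => if p.1 = j then v p.2 else 0
def colv (a : Fin m) (x : Fin n × Fin m → ℂ) : Fin n → ℂ := fun i => x (i, a)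
def emb2 (b : Fin m) (v : Fin n → ℂ) : Fin n × Fin m → ℂ :=
  fun p => if p.2 = b then v p.1 else 0

def pt (X : Matrix (Fin n × Fin m) (Fin n × Fin m) ℂ) :
    Matrix (Fin n × Fin m) (Fin n × Fin m) ℂ :=
  Matrix.of fun p q => X (q.1, p.2) (p.1, q.2)

lemma enorm_emb (j : Fin n) (v : Fin m → ℂ) : enorm (emb j v) = enorm v := by
  rw [enorm_eq, enorm_eq]
  congr 1
  rw [Fintype.sum_prod_type]
  simp [emb, apply_ite, Finset.sum_ite_eq', Finset.sum_ite_eq]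

lemma enorm_emb2 (b : Fin m) (v : Fin n → ℂ) : enorm (emb2 b v) = enorm v := by
  rw [enorm_eq, enorm_eq]
  congr 1
  rw [Fintype.sum_prod_type_right]
  simp [emb2, apply_ite, Finset.sum_ite_eq', Finset.sum_ite_eq]

lemma sum_enorm_rowv_le (x : Fin n × Fin m → ℂ) :
    ∑ i : Fin n, enorm (rowv i x) ≤ Real.sqrt n * enorm x := by
  have h1 : (∑ i : Fin n, enorm (rowv i x)) ^ 2 ≤ n * enorm x ^ 2 := by
    calc (∑ i : Fin n, enorm (rowv i x)) ^ 2
        ≤ (Finset.univ.card : ℝ) * ∑ i : Fin n, enorm (rowv i x) ^ 2 :=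
          sq_sum_le_card_mul_sum_sq
      _ = n * enorm x ^ 2 := by
          rw [Finset.card_univ, Fintype.card_fin]
          congr 1
          rw [enorm_sq, Fintype.sum_prod_type]
          exact Finset.sum_congr rfl fun i _ => by rw [enorm_sq]; rfl
  have h2 : 0 ≤ ∑ i : Fin n, enorm (rowv i x) :=
    Finset.sum_nonneg fun i _ => enorm_nonneg _
  nlinarith [Real.sq_sqrt (show (0:ℝ) ≤ n by positivity), Real.sqrt_nonneg (n:ℝ),
    enorm_nonneg x, mul_nonneg (Real.sqrt_nonneg (n:ℝ)) (enorm_nonneg x)]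

lemma sum_enorm_colv_le (x : Fin n × Fin m → ℂ) :
    ∑ a : Fin m, enorm (colv a x) ≤ Real.sqrt m * enorm x := by
  have h1 : (∑ a : Fin m, enorm (colv a x)) ^ 2 ≤ m * enorm x ^ 2 := by
    calc (∑ a : Fin m, enorm (colv a x)) ^ 2
        ≤ (Finset.univ.card : ℝ) * ∑ a : Fin m, enorm (colv a x) ^ 2 :=
          sq_sum_le_card_mul_sum_sq
      _ = m * enorm x ^ 2 := by
          rw [Finset.card_univ, Fintype.card_fin]
          congr 1
          rw [enorm_sq, Fintype.sum_prod_type_right]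
          exact Finset.sum_congr rfl fun a _ => by rw [enorm_sq]; rfl
  have h2 : 0 ≤ ∑ a : Fin m, enorm (colv a x) :=
    Finset.sum_nonneg fun a _ => enorm_nonneg _
  nlinarith [Real.sq_sqrt (show (0:ℝ) ≤ m by positivity), Real.sqrt_nonneg (m:ℝ),
    enorm_nonneg x, mul_nonneg (Real.sqrt_nonneg (m:ℝ)) (enorm_nonneg x)]

lemma sum4_reorder {α β γ δ M : Type*} [Fintype α] [Fintype β] [Fintype γ] [Fintype δ]
    [AddCommMonoid M] (f : α → β → γ → δ → M) :
    ∑ i, ∑ a, ∑ j, ∑ b, f i a j b = ∑ a, ∑ b, ∑ j, ∑ i, f i a j b := by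
  rw [Finset.sum_comm]
  refine Finset.sum_congr rfl fun a _ => ?_
  trans (∑ j, ∑ i, ∑ b, f i a j b)
  · exact Finset.sum_comm
  trans (∑ j, ∑ b, ∑ i, f i a j b)
  · exact Finset.sum_congr rfl fun j _ => Finset.sum_comm
  exact Finset.sum_comm

lemma decomp1 (X : Matrix (Fin n × Fin m) (Fin n × Fin m) ℂ)
    (x y : Fin n × Fin m → ℂ) :
    star x ⬝ᵥ (pt X *ᵥ y) =
      ∑ i : Fin n, ∑ j : Fin n,
        star (emb j (rowv i x)) ⬝ᵥ (X *ᵥ emb i (rowv j y)) := by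
  simp only [dotProduct, mulVec, pt, emb, rowv, of_apply, Pi.star_apply,
    Fintype.sum_prod_type, apply_ite (star : ℂ → ℂ), star_zero, ite_mul, mul_ite,
    zero_mul, mul_zero]
  simp only [Finset.sum_ite_eq', Finset.sum_ite_eq, Finset.mem_univ, if_true,
    Finset.sum_ite_irrel, Finset.sum_const_zero]
  simp_rw [Finset.mul_sum]
  exact Finset.sum_congr rfl fun i _ => Finset.sum_comm

lemma decomp2 (X : Matrix (Fin n × Fin m) (Fin n × Fin m) ℂ)
    (x y : Fin n × Fin m → ℂ) :
    star x ⬝ᵥ (pt X *ᵥ y) =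
      ∑ a : Fin m, ∑ b : Fin m,
        star (emb2 a (fun j => star (y (j, b)))) ⬝ᵥ
          (X *ᵥ emb2 b (fun i => star (x (i, a)))) := by
  simp only [dotProduct, mulVec, pt, emb2, of_apply, Pi.star_apply,
    Fintype.sum_prod_type, apply_ite (star : ℂ → ℂ), star_zero, star_star,
    ite_mul, mul_ite, zero_mul, mul_zero]
  simp only [Finset.sum_ite_eq', Finset.sum_ite_eq, Finset.mem_univ, if_true,
    Finset.sum_ite_irrel, Finset.sum_const_zero]
  simp_rw [Finset.mul_sum]
  rw [sum4_reorder]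
  refine Finset.sum_congr rfl fun a _ => Finset.sum_congr rfl fun b _ =>
    Finset.sum_congr rfl fun j _ => Finset.sum_congr rfl fun i _ => by ring

lemma enorm_star_vec {ι : Type*} [Fintype ι] [DecidableEq ι] (v : ι → ℂ) :
    enorm (fun i => star (v i)) = enorm v := by
  rw [enorm_eq, enorm_eq]
  congr 1
  exact Finset.sum_congr rfl fun i _ => by simp

lemma pt_norm_le_n (X : Matrix (Fin n × Fin m) (Fin n × Fin m) ℂ) :
    ‖pt X‖ ≤ n * ‖X‖ := by
  refine opNorm_le_of_inner (mul_nonneg (Nat.cast_nonneg n) (norm_nonneg X)) fun x y => ?_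
  rw [decomp1]
  calc ‖∑ i : Fin n, ∑ j : Fin n, star (emb j (rowv i x)) ⬝ᵥ (X *ᵥ emb i (rowv j y))‖
      ≤ ∑ i : Fin n, ∑ j : Fin n, ‖star (emb j (rowv i x)) ⬝ᵥ (X *ᵥ emb i (rowv j y))‖ := by
        refine le_trans (norm_sum_le _ _) ?_
        exact Finset.sum_le_sum fun i _ => norm_sum_le _ _
    _ ≤ ∑ i : Fin n, ∑ j : Fin n, ‖X‖ * enorm (rowv i x) * enorm (rowv j y) := by
        refine Finset.sum_le_sum fun i _ => Finset.sum_le_sum fun j _ => ?_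
        have := inner_mulVec_le X (emb j (rowv i x)) (emb i (rowv j y))
        rwa [enorm_emb, enorm_emb] at this
    _ = ‖X‖ * ((∑ i : Fin n, enorm (rowv i x)) * (∑ j : Fin n, enorm (rowv j y))) := by
        rw [Finset.sum_mul_sum]
        rw [Finset.mul_sum]
        refine Finset.sum_congr rfl fun i _ => ?_
        rw [Finset.mul_sum]
        exact Finset.sum_congr rfl fun j _ => by ring
    _ ≤ ‖X‖ * ((Real.sqrt n * enorm x) * (Real.sqrt n * enorm y)) := by
        refine mul_le_mul_of_nonneg_left ?_ (norm_nonneg X)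
        refine mul_le_mul (sum_enorm_rowv_le x) (sum_enorm_rowv_le y)
          (Finset.sum_nonneg fun j _ => enorm_nonneg _)
          (mul_nonneg (Real.sqrt_nonneg _) (enorm_nonneg _))
    _ = (Real.sqrt n * Real.sqrt n) * ‖X‖ * enorm x * enorm y := by ring
    _ = (n : ℝ) * ‖X‖ * enorm x * enorm y := by
        rw [Real.mul_self_sqrt (by positivity)]

lemma pt_norm_le_m (X : Matrix (Fin n × Fin m) (Fin n × Fin m) ℂ) :
    ‖pt X‖ ≤ m * ‖X‖ := by
  refine opNorm_le_of_inner (mul_nonneg (Nat.cast_nonneg m) (norm_nonneg X)) fun x y => ?_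
  rw [decomp2]
  calc ‖∑ a : Fin m, ∑ b : Fin m, star (emb2 a (fun j => star (y (j, b)))) ⬝ᵥ
          (X *ᵥ emb2 b (fun i => star (x (i, a))))‖
      ≤ ∑ a : Fin m, ∑ b : Fin m, ‖star (emb2 a (fun j => star (y (j, b)))) ⬝ᵥ
          (X *ᵥ emb2 b (fun i => star (x (i, a))))‖ := by
        refine le_trans (norm_sum_le _ _) ?_
        exact Finset.sum_le_sum fun a _ => norm_sum_le _ _
    _ ≤ ∑ a : Fin m, ∑ b : Fin m, ‖X‖ * enorm (colv b y) * enorm (colv a x) := by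
        refine Finset.sum_le_sum fun a _ => Finset.sum_le_sum fun b _ => ?_
        have := inner_mulVec_le X (emb2 a (fun j => star (y (j, b))))
          (emb2 b (fun i => star (x (i, a))))
        have e1 : enorm (fun j => star (y (j, b))) = enorm (colv b y) :=
          enorm_star_vec (colv b y)
        have e2 : enorm (fun i => star (x (i, a))) = enorm (colv a x) :=
          enorm_star_vec (colv a x)
        rwa [enorm_emb2, enorm_emb2, e1, e2] at this
    _ = ‖X‖ * ((∑ a : Fin m, enorm (colv a x)) * (∑ b : Fin m, enorm (colv b y))) := by
        rw [Finset.sum_mul_sum]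
        rw [Finset.mul_sum]
        refine Finset.sum_congr rfl fun a _ => ?_
        rw [Finset.mul_sum]
        exact Finset.sum_congr rfl fun b _ => by ring
    _ ≤ ‖X‖ * ((Real.sqrt m * enorm x) * (Real.sqrt m * enorm y)) := by
        refine mul_le_mul_of_nonneg_left ?_ (norm_nonneg X)
        refine mul_le_mul (sum_enorm_colv_le x) (sum_enorm_colv_le y)
          (Finset.sum_nonneg fun b _ => enorm_nonneg _)
          (mul_nonneg (Real.sqrt_nonneg _) (enorm_nonneg _))
    _ = (Real.sqrt m * Real.sqrt m) * ‖X‖ * enorm x * enorm y := by ring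
    _ = (m : ℝ) * ‖X‖ * enorm x * enorm y := by
        rw [Real.mul_self_sqrt (by positivity)]

/-! ### identification of T with pt -/

lemma stdBasis_kron (i j : Fin n) (a b : Fin m) (c : ℂ) :
    Matrix.single (i, a) (j, b) c = (Matrix.single i j c) ⊗ₖ (Matrix.single a b 1) := by
  ext ⟨p, q⟩ ⟨r, s⟩
  simp only [Matrix.single, of_apply, kroneckerMap_apply, Prod.mk.injEq]
  by_cases h1 : i = p <;> by_cases h2 : j = r <;> by_cases h3 : a = q <;> by_cases h4 : b = s <;>
    simp [h1, h2, h3, h4]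

lemma T_eq_pt
    (T : Matrix (Fin n × Fin m) (Fin n × Fin m) ℂ →ₗ[ℂ]
         Matrix (Fin n × Fin m) (Fin n × Fin m) ℂ)
    (hT : ∀ (A : Matrix (Fin n) (Fin n) ℂ) (B : Matrix (Fin m) (Fin m) ℂ),
      T (A ⊗ₖ B) = Aᵀ ⊗ₖ B)
    (X : Matrix (Fin n × Fin m) (Fin n × Fin m) ℂ) :
    T X = pt X := by
  have hX : X = ∑ p : Fin n × Fin m, ∑ q : Fin n × Fin m, Matrix.single p q (X p q) :=
    matrix_eq_sum_single X
  have key : ∀ (p q : Fin n × Fin m) (c : ℂ),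
      T (Matrix.single p q c) = Matrix.single (q.1, p.2) (p.1, q.2) c := by
    rintro ⟨i, a⟩ ⟨j, b⟩ c
    rw [stdBasis_kron, hT]
    rw [show (Matrix.single i j c)ᵀ = Matrix.single j i c by
      ext p q; simp [Matrix.single, transpose_apply, and_comm]]
    rw [← stdBasis_kron]
  conv_lhs => rw [hX]
  rw [map_sum]
  simp_rw [map_sum, key]
  ext ⟨r1, r2⟩ ⟨s1, s2⟩
  simp only [Finset.sum_apply, Matrix.sum_apply, pt, of_apply]
  rw [Fintype.sum_prod_type]
  simp only [Fintype.sum_prod_type]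
  simp [Matrix.single, Prod.ext_iff, ite_and, Finset.sum_ite_irrel, Finset.sum_ite_eq,
    Finset.sum_ite_eq', Finset.sum_const_zero]

/-! ### lower bound witness -/

def uvec : Fin n × Fin m → ℂ := fun p => if (p.1 : ℕ) = (p.2 : ℕ) then 1 else 0

def X0 : Matrix (Fin n × Fin m) (Fin n × Fin m) ℂ :=
  Matrix.of fun p q => if (p.1 : ℕ) = (q.2 : ℕ) ∧ (q.1 : ℕ) = (p.2 : ℕ) then 1 else 0

lemma card_diag : (Finset.univ.filter
    fun p : Fin n × Fin m => (p.1 : ℕ) = (p.2 : ℕ)).card = min n m := by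
  rw [← Fintype.card_fin (min n m), ← Finset.card_univ]
  refine Finset.card_bij' (fun p hp => ⟨p.1.val, ?_⟩)
    (fun t _ => (⟨t.val, lt_of_lt_of_le t.2 (min_le_left n m)⟩,
                 ⟨t.val, lt_of_lt_of_le t.2 (min_le_right n m)⟩)) ?_ ?_ ?_ ?_
  · simp only [Finset.mem_filter] at hp
    exact lt_min p.1.2 (hp.2 ▸ p.2.2)
  · intro p hp; exact Finset.mem_univ _
  · intro t ht; simp
  · intro p hp
    simp only [Finset.mem_filter] at hp
    ext <;> simp [hp.2]
  · intro t ht; rfl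

lemma sum_diag_boole {R : Type*} [NonAssocSemiring R] :
    (∑ p : Fin n × Fin m, if (p.1 : ℕ) = (p.2 : ℕ) then (1 : R) else 0) =
      (min n m : ℕ) := by
  rw [Finset.sum_boole, card_diag]

lemma uvec_mul_self (p : Fin n × Fin m) : uvec p * uvec p = uvec p := by
  unfold uvec; split <;> simp

lemma star_uvec : star (uvec : Fin n × Fin m → ℂ) = uvec := by
  funext p; unfold uvec; simp [apply_ite (star : ℂ → ℂ)]

lemma pt_X0 : pt (X0 : Matrix (Fin n × Fin m) (Fin n × Fin m) ℂ) =
    Matrix.of fun p q => uvec p * uvec q := by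
  ext ⟨p1, p2⟩ ⟨q1, q2⟩
  simp only [pt, X0, uvec, of_apply]
  by_cases h1 : (p1 : ℕ) = (p2 : ℕ) <;> by_cases h2 : (q1 : ℕ) = (q2 : ℕ) <;>
    simp [h1, h2, and_comm]

lemma X0_conjTranspose : (X0 : Matrix (Fin n × Fin m) (Fin n × Fin m) ℂ)ᴴ = X0 := by
  ext ⟨p1, p2⟩ ⟨q1, q2⟩
  simp only [conjTranspose_apply, X0, of_apply, apply_ite (star : ℂ → ℂ), star_one, star_zero]
  by_cases h1 : (p1 : ℕ) = (q2 : ℕ) <;> by_cases h2 : (q1 : ℕ) = (p2 : ℕ) <;>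
    simp [h1, h2] <;> omega

lemma X0_mul_X0 : (X0 : Matrix (Fin n × Fin m) (Fin n × Fin m) ℂ) * X0 =
    Matrix.of fun p q =>
      if (p.1 : ℕ) < m ∧ (p.2 : ℕ) < n ∧ q = p then 1 else 0 := by
  ext p q
  rw [mul_apply]
  by_cases h1 : (p.1 : ℕ) < m ∧ (p.2 : ℕ) < n
  · rw [Finset.sum_eq_single (⟨⟨p.2.val, h1.2⟩, ⟨p.1.val, h1.1⟩⟩ : Fin n × Fin m)]
    · simp only [X0, of_apply]
      by_cases h2 : (p.2 : ℕ) = (q.2 : ℕ) ∧ (q.1 : ℕ) = (p.1 : ℕ)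
      · have hqp : q = p := by
          obtain ⟨q1, q2⟩ := q; obtain ⟨pp1, pp2⟩ := p
          simp_all [Prod.ext_iff, Fin.ext_iff]
        subst hqp
        simp [h1.1, h1.2]
      · have : ¬ (q = p) := by
          rintro rfl; exact h2 ⟨rfl, rfl⟩
        simp [h2, this, h1]
    · rintro ⟨r1, r2⟩ hr hne
      simp only [X0, of_apply]
      rw [ite_mul, one_mul, zero_mul]
      split
      · next h =>
          exfalso; apply hne
          obtain ⟨ha, hb⟩ := h
          ext <;> simp <;> omega
      · rfl
    · intro h; exact absurd (Finset.mem_univ _) h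
  · rw [Finset.sum_eq_zero, of_apply]
    · rw [eq_comm, ite_eq_right_iff]
      rintro ⟨ha, hb, -⟩; exact absurd ⟨ha, hb⟩ h1
    · rintro ⟨r1, r2⟩ -
      simp only [X0, of_apply]
      rw [ite_mul, one_mul, zero_mul]
      rw [ite_eq_right_iff]
      rintro ⟨ha, hb⟩
      rw [ite_eq_right_iff]
      rintro ⟨hc, hd⟩
      exfalso; apply h1
      constructor <;> omega

lemma diag_norm_le_one :
    ‖(Matrix.of fun p q : Fin n × Fin m =>
        if (p.1 : ℕ) < m ∧ (p.2 : ℕ) < n ∧ q = p then (1:ℂ) else 0)‖ ≤ 1 := by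
  refine opNorm_le_of_mulVec zero_le_one fun v => ?_
  rw [one_mul]
  have hmv : ∀ p, ((Matrix.of fun p q : Fin n × Fin m =>
      if (p.1 : ℕ) < m ∧ (p.2 : ℕ) < n ∧ q = p then (1:ℂ) else 0) *ᵥ v) p =
      if (p.1 : ℕ) < m ∧ (p.2 : ℕ) < n then v p else 0 := by
    intro p
    simp only [mulVec, dotProduct, of_apply, ite_and, Finset.sum_ite_irrel,
      ite_mul, one_mul, zero_mul, Finset.sum_ite_eq', Finset.mem_univ, if_true,
      Finset.sum_const_zero]
  rw [enorm_eq, enorm_eq]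
  refine Real.sqrt_le_sqrt (Finset.sum_le_sum fun p _ => ?_)
  rw [hmv p]
  split
  · exact le_refl _
  · simpa using sq_nonneg ‖v p‖

lemma X0_norm_le_one : ‖(X0 : Matrix (Fin n × Fin m) (Fin n × Fin m) ℂ)‖ ≤ 1 := by
  have h1 : ‖(X0 : Matrix (Fin n × Fin m) (Fin n × Fin m) ℂ)‖ *
      ‖(X0 : Matrix (Fin n × Fin m) (Fin n × Fin m) ℂ)‖ ≤ 1 := by
    rw [← Matrix.l2_opNorm_conjTranspose_mul_self, X0_conjTranspose, X0_mul_X0]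
    exact diag_norm_le_one
  nlinarith [norm_nonneg (X0 : Matrix (Fin n × Fin m) (Fin n × Fin m) ℂ)]

lemma enorm_uvec_sq : enorm (uvec : Fin n × Fin m → ℂ) ^ 2 = (min n m : ℕ) := by
  rw [enorm_sq]
  rw [show (∑ p : Fin n × Fin m, ‖uvec p‖ ^ 2) =
      ∑ p : Fin n × Fin m, if (p.1 : ℕ) = (p.2 : ℕ) then (1:ℝ) else 0 by
    refine Finset.sum_congr rfl fun p _ => ?_
    unfold uvec; split <;> simp]
  exact sum_diag_boole

lemma inner_pt_X0 :
    star (uvec : Fin n × Fin m → ℂ) ⬝ᵥ (pt X0 *ᵥ uvec) =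
      ((min n m : ℕ) : ℂ) * ((min n m : ℕ) : ℂ) := by
  rw [pt_X0]
  have hsum : (∑ q : Fin n × Fin m, uvec q * uvec q) = ((min n m : ℕ) : ℂ) := by
    simp_rw [uvec_mul_self]
    rw [show (∑ q : Fin n × Fin m, uvec q) =
        ∑ q : Fin n × Fin m, if (q.1 : ℕ) = (q.2 : ℕ) then (1:ℂ) else 0 from rfl]
    exact sum_diag_boole
  have hmv : (Matrix.of fun p q : Fin n × Fin m => uvec p * uvec q) *ᵥ uvec =
      fun p => uvec p * ((min n m : ℕ) : ℂ) := by
    funext p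
    simp only [mulVec, dotProduct, of_apply]
    rw [show (∑ q : Fin n × Fin m, uvec p * uvec q * uvec q) =
        uvec p * ∑ q : Fin n × Fin m, uvec q * uvec q by
      rw [Finset.mul_sum]; exact Finset.sum_congr rfl fun q _ => by ring]
    rw [hsum]
  rw [hmv, star_uvec]
  rw [show (uvec ⬝ᵥ fun p : Fin n × Fin m => uvec p * ((min n m : ℕ) : ℂ)) =
      (∑ p : Fin n × Fin m, uvec p * uvec p) * ((min n m : ℕ) : ℂ) by
    simp only [dotProduct]
    rw [Finset.sum_mul]
    exact Finset.sum_congr rfl fun p _ => by ring]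
  simp_rw [uvec_mul_self]
  rw [show (∑ q : Fin n × Fin m, uvec q) =
      ∑ q : Fin n × Fin m, if (q.1 : ℕ) = (q.2 : ℕ) then (1:ℂ) else 0 from rfl]
  rw [sum_diag_boole]

end Stmt0Aux


/-- Let `n, m ≥ 1` and let `T` be the linear map
`τₙ ⊗ id : Mₙ(ℂ) ⊗ Mₘ(ℂ) → Mₙ(ℂ) ⊗ Mₘ(ℂ)`, characterised on Kronecker products by
`T (A ⊗ₖ B) = Aᵀ ⊗ₖ B`.  Then the operator norm of `T` (with respect to the C*-norm,
i.e. the L2-operator norm on matrices) equals `min m n`. -/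
theorem stmt0 (n m : ℕ) (hn : 1 ≤ n) (hm : 1 ≤ m)
    (T : Matrix (Fin n × Fin m) (Fin n × Fin m) ℂ →ₗ[ℂ]
         Matrix (Fin n × Fin m) (Fin n × Fin m) ℂ)
    (hT : ∀ (A : Matrix (Fin n) (Fin n) ℂ) (B : Matrix (Fin m) (Fin m) ℂ),
      T (A ⊗ₖ B) = Aᵀ ⊗ₖ B) :
    ‖LinearMap.toContinuousLinearMap T‖ = min (m : ℝ) (n : ℝ) := by
  classical
  have hTpt := Stmt0Aux.T_eq_pt T hT
  have hcast : min (m : ℝ) (n : ℝ) = ((min n m : ℕ) : ℝ) := by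
    rw [Nat.cast_min, min_comm]
  rw [hcast]
  have hcoe : ∀ X, (LinearMap.toContinuousLinearMap T) X = T X := fun X => rfl
  apply le_antisymm
  · refine ContinuousLinearMap.opNorm_le_bound _ (Nat.cast_nonneg _) fun X => ?_
    rw [hcoe X, hTpt X]
    have h1 := Stmt0Aux.pt_norm_le_n X
    have h2 := Stmt0Aux.pt_norm_le_m X
    have hmin : ((min n m : ℕ) : ℝ) = min (n : ℝ) (m : ℝ) := Nat.cast_min n m
    rcases min_cases (n : ℝ) (m : ℝ) with ⟨h, -⟩ | ⟨h, -⟩ <;> rw [hmin, h] <;> assumption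
  · -- lower bound
    set k : ℕ := min n m with hk
    have hk1 : 1 ≤ k := le_min hn hm
    have hkR : (1 : ℝ) ≤ (k : ℝ) := by exact_mod_cast hk1
    have hle := Stmt0Aux.inner_mulVec_le (Stmt0Aux.pt (Stmt0Aux.X0 (n := n) (m := m)))
      Stmt0Aux.uvec Stmt0Aux.uvec
    rw [Stmt0Aux.inner_pt_X0] at hle
    have hnorm : ‖((k : ℕ) : ℂ) * ((k : ℕ) : ℂ)‖ = (k : ℝ) * (k : ℝ) := by
      rw [norm_mul, Complex.norm_natCast]
    rw [hnorm] at hle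
    have henorm : Stmt0Aux.enorm (Stmt0Aux.uvec (n := n) (m := m)) *
        Stmt0Aux.enorm (Stmt0Aux.uvec (n := n) (m := m)) = (k : ℝ) := by
      rw [← sq, Stmt0Aux.enorm_uvec_sq]
    have hle2 : (k : ℝ) * k ≤ ‖Stmt0Aux.pt (Stmt0Aux.X0 (n := n) (m := m))‖ * k := by
      calc (k : ℝ) * k ≤ ‖Stmt0Aux.pt (Stmt0Aux.X0 (n := n) (m := m))‖ *
            Stmt0Aux.enorm Stmt0Aux.uvec * Stmt0Aux.enorm Stmt0Aux.uvec := hle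
        _ = ‖Stmt0Aux.pt (Stmt0Aux.X0 (n := n) (m := m))‖ * k := by
            rw [mul_assoc, henorm]
    have hptk : (k : ℝ) ≤ ‖Stmt0Aux.pt (Stmt0Aux.X0 (n := n) (m := m))‖ :=
      le_of_mul_le_mul_right hle2 (by linarith)
    have hTX0 : ‖Stmt0Aux.pt (Stmt0Aux.X0 (n := n) (m := m))‖ ≤
        ‖LinearMap.toContinuousLinearMap T‖ := by
      calc ‖Stmt0Aux.pt (Stmt0Aux.X0 (n := n) (m := m))‖
          = ‖(LinearMap.toContinuousLinearMap T) (Stmt0Aux.X0 (n := n) (m := m))‖ := by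
            rw [hcoe, hTpt]
        _ ≤ ‖LinearMap.toContinuousLinearMap T‖ * ‖Stmt0Aux.X0 (n := n) (m := m)‖ :=
            (LinearMap.toContinuousLinearMap T).le_opNorm _
        _ ≤ ‖LinearMap.toContinuousLinearMap T‖ * 1 :=
            mul_le_mul_of_nonneg_left Stmt0Aux.X0_norm_le_one (norm_nonneg (LinearMap.toContinuousLinearMap T))
        _ = ‖LinearMap.toContinuousLinearMap T‖ := mul_one _
    exact le_trans hptk hTX0
end

section
/- Let n ≥ 2 be an integer. The map (1/(n-1))·τₙ : Mₙ(ℂ) → Mₙ(ℂ), where τₙ is the transpose map, is (n-1)-contractive but not n-contractive. -/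
open scoped Kronecker
open Matrix
open scoped Matrix.Norms.L2Operator

noncomputable section

/-- The transpose map `τₙ : Mₙ(ℂ) → Mₙ(ℂ)` as a `ℂ`-linear map. -/
def transposeLM (n : ℕ) : Matrix (Fin n) (Fin n) ℂ →ₗ[ℂ] Matrix (Fin n) (Fin n) ℂ where
  toFun := Matrix.transpose
  map_add' := Matrix.transpose_add
  map_smul' c A := Matrix.transpose_smul c A

/-- `T` is the amplification `φ ⊗ id_{M_k}` of `φ`, under the Kronecker identification
`Mₙ(ℂ) ⊗ M_k(ℂ) ≅ M_{nk}(ℂ)`. -/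
def IsAmplification {n : ℕ} (φ : Matrix (Fin n) (Fin n) ℂ →ₗ[ℂ] Matrix (Fin n) (Fin n) ℂ)
    (k : ℕ) (T : Matrix (Fin n × Fin k) (Fin n × Fin k) ℂ →ₗ[ℂ]
                 Matrix (Fin n × Fin k) (Fin n × Fin k) ℂ) : Prop :=
  ∀ (A : Matrix (Fin n) (Fin n) ℂ) (B : Matrix (Fin k) (Fin k) ℂ), T (A ⊗ₖ B) = (φ A) ⊗ₖ B

/-- partial transpose -/
def PT (n k : ℕ) : Matrix (Fin n × Fin k) (Fin n × Fin k) ℂ →ₗ[ℂ]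
    Matrix (Fin n × Fin k) (Fin n × Fin k) ℂ where
  toFun X := Matrix.of fun ip jq => X (jq.1, ip.2) (ip.1, jq.2)
  map_add' X Y := by ext ⟨i,p⟩ ⟨j,q⟩; simp
  map_smul' c X := by ext ⟨i,p⟩ ⟨j,q⟩; simp

lemma PT_kron (n k : ℕ) (A : Matrix (Fin n) (Fin n) ℂ) (B : Matrix (Fin k) (Fin k) ℂ) :
    PT n k (A ⊗ₖ B) = Aᵀ ⊗ₖ B := by
  ext ⟨i,p⟩ ⟨j,q⟩
  simp [PT, Matrix.kroneckerMap_apply]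

lemma isAmplification_smul_PT (n k : ℕ) (c : ℂ) :
    IsAmplification (c • transposeLM n) k (c • PT n k) := by
  intro A B
  simp [PT_kron, transposeLM, Matrix.smul_kronecker]

lemma amplification_unique {n k : ℕ} (φ : Matrix (Fin n) (Fin n) ℂ →ₗ[ℂ] Matrix (Fin n) (Fin n) ℂ)
    (T T' : Matrix (Fin n × Fin k) (Fin n × Fin k) ℂ →ₗ[ℂ]
            Matrix (Fin n × Fin k) (Fin n × Fin k) ℂ)
    (h : IsAmplification φ k T) (h' : IsAmplification φ k T') : T = T' := by
  refine LinearMap.ext fun X => ?_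
  have hX : X = ∑ i, ∑ j, single i j (X i j) := matrix_eq_sum_single X
  suffices h2 : T (∑ i, ∑ j, single i j (X i j))
      = T' (∑ i, ∑ j, single i j (X i j)) by rwa [← hX] at h2
  rw [map_sum, map_sum]
  refine Finset.sum_congr rfl fun ip _ => ?_
  rw [map_sum, map_sum]
  refine Finset.sum_congr rfl fun jq _ => ?_
  obtain ⟨i, p⟩ := ip
  obtain ⟨j, q⟩ := jq
  have hb : single (i,p) (j,q) (X (i,p) (j,q))
      = (single i j (X (i,p) (j,q))) ⊗ₖ (single p q 1) := by
    ext ⟨a,b⟩ ⟨c,d⟩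
    simp only [Matrix.single, Matrix.of_apply, Matrix.kroneckerMap_apply, Prod.mk.injEq]
    by_cases h1 : i = a <;> by_cases h2 : p = b <;> by_cases h3 : j = c <;>
      by_cases h4 : q = d <;> simp [h1, h2, h3, h4]
  rw [hb, h, h']


lemma opnorm_le_of_mulVec {m n : Type*} [Fintype m] [Fintype n] [DecidableEq n]
    (A : Matrix m n ℂ) (c : ℝ) (hc : 0 ≤ c)
    (h : ∀ v : n → ℂ, Real.sqrt (∑ i, ‖(A *ᵥ v) i‖ ^ 2) ≤ c * Real.sqrt (∑ i, ‖v i‖ ^ 2)) :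
    ‖A‖ ≤ c := by
  rw [Matrix.l2_opNorm_def]
  refine ContinuousLinearMap.opNorm_le_bound _ hc fun v => ?_
  have h2 := h (⇑(WithLp.equiv 2 _) v)
  rw [EuclideanSpace.norm_eq v]
  convert h2 using 2
  rw [EuclideanSpace.norm_eq]
  congr 1
  all_goals rfl

lemma mulVec_le_opnorm {m n : Type*} [Fintype m] [Fintype n] [DecidableEq n]
    (A : Matrix m n ℂ) (v : n → ℂ) :
    Real.sqrt (∑ i, ‖(A *ᵥ v) i‖ ^ 2) ≤ ‖A‖ * Real.sqrt (∑ i, ‖v i‖ ^ 2) := by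
  have := Matrix.l2_opNorm_mulVec A ((WithLp.equiv 2 _).symm v)
  rw [EuclideanSpace.norm_eq, EuclideanSpace.norm_eq] at this
  convert this using 3
  all_goals rfl

lemma mulVec_sq_le_opnorm {m n : Type*} [Fintype m] [Fintype n] [DecidableEq n]
    (A : Matrix m n ℂ) (v : n → ℂ) :
    (∑ i, ‖(A *ᵥ v) i‖ ^ 2) ≤ ‖A‖ ^ 2 * ∑ i, ‖v i‖ ^ 2 := by
  have h := mulVec_le_opnorm A v
  have h1 : (0:ℝ) ≤ ∑ i, ‖(A *ᵥ v) i‖ ^ 2 := Finset.sum_nonneg fun _ _ => sq_nonneg _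
  have h2 : (0:ℝ) ≤ ∑ i, ‖v i‖ ^ 2 := Finset.sum_nonneg fun _ _ => sq_nonneg _
  calc (∑ i, ‖(A *ᵥ v) i‖ ^ 2) = Real.sqrt (∑ i, ‖(A *ᵥ v) i‖ ^ 2) ^ 2 := (Real.sq_sqrt h1).symm
    _ ≤ (‖A‖ * Real.sqrt (∑ i, ‖v i‖ ^ 2)) ^ 2 := by
        apply pow_le_pow_left₀ (Real.sqrt_nonneg _) h
    _ = ‖A‖ ^ 2 * ∑ i, ‖v i‖ ^ 2 := by rw [mul_pow, Real.sq_sqrt h2]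

section Td
variable {n k : ℕ} [NeZero k]

/-- summand of partial transpose -/
def Td (X : Matrix (Fin n × Fin k) (Fin n × Fin k) ℂ) (d : Fin k) :
    Matrix (Fin n × Fin k) (Fin n × Fin k) ℂ :=
  Matrix.of fun ip jq => if jq.2 = ip.2 + d then X (jq.1, ip.2) (ip.1, jq.2) else 0

lemma Td_norm_le (X : Matrix (Fin n × Fin k) (Fin n × Fin k) ℂ) (d : Fin k) :
    ‖Td X d‖ ≤ ‖X‖ := by
  rw [← Matrix.l2_opNorm_conjTranspose (Td X d)]
  refine opnorm_le_of_mulVec _ _ (norm_nonneg X) fun v => ?_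
  -- the vector w_q
  set w : Fin k → (Fin n × Fin k) → ℂ :=
    fun q => fun ir => if ir.2 = q then star (v (ir.1, q - d)) else 0 with hw
  have key : ∀ j : Fin n, ∀ q : Fin k,
      ((Td X d)ᴴ *ᵥ v) (j, q) = star ((X *ᵥ w q) (j, q - d)) := by
    intro j q
    simp only [Matrix.mulVec, dotProduct, Matrix.conjTranspose_apply, Td, Matrix.of_apply, hw]
    rw [Fintype.sum_prod_type, Fintype.sum_prod_type]
    rw [star_sum]
    refine Finset.sum_congr rfl fun i _ => ?_
    rw [star_sum]
    have hiff : ∀ y : Fin k, (q = y + d) ↔ (y = q - d) := fun y => by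
      rw [← sub_eq_iff_eq_add, eq_comm]
    simp only [apply_ite (star : ℂ → ℂ), star_zero, ite_mul, zero_mul, mul_ite, mul_zero, hiff]
    rw [Finset.sum_ite_eq' Finset.univ (q - d), Finset.sum_ite_eq' Finset.univ q]
    simp [StarMul.star_mul, mul_comm]
  have hsum : (∑ jq : Fin n × Fin k, ‖((Td X d)ᴴ *ᵥ v) jq‖ ^ 2)
      ≤ ‖X‖ ^ 2 * ∑ ir, ‖v ir‖ ^ 2 := by
    rw [Fintype.sum_prod_type, Finset.sum_comm]
    have step1 : ∀ q : Fin k, (∑ j : Fin n, ‖((Td X d)ᴴ *ᵥ v) (j, q)‖ ^ 2)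
        ≤ ‖X‖ ^ 2 * ∑ ir, ‖w q ir‖ ^ 2 := by
      intro q
      have h1 : (∑ j : Fin n, ‖((Td X d)ᴴ *ᵥ v) (j, q)‖ ^ 2)
          = ∑ j : Fin n, ‖(X *ᵥ w q) (j, q - d)‖ ^ 2 := by
        refine Finset.sum_congr rfl fun j _ => ?_
        rw [key j q, norm_star]
      rw [h1]
      refine le_trans ?_ (mulVec_sq_le_opnorm X (w q))
      rw [Fintype.sum_prod_type, Finset.sum_comm]
      refine Finset.single_le_sum (f := fun r => ∑ j : Fin n, ‖(X *ᵥ w q) (j, r)‖ ^ 2)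
        (fun r _ => Finset.sum_nonneg fun _ _ => sq_nonneg _) (Finset.mem_univ (q - d))
    calc (∑ q : Fin k, ∑ j : Fin n, ‖((Td X d)ᴴ *ᵥ v) (j, q)‖ ^ 2)
        ≤ ∑ q : Fin k, ‖X‖ ^ 2 * ∑ ir, ‖w q ir‖ ^ 2 :=
          Finset.sum_le_sum fun q _ => step1 q
      _ = ‖X‖ ^ 2 * ∑ q : Fin k, ∑ ir, ‖w q ir‖ ^ 2 := by rw [Finset.mul_sum]
      _ = ‖X‖ ^ 2 * ∑ ir, ‖v ir‖ ^ 2 := by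
          congr 1
          have hwq : ∀ q : Fin k, (∑ ir : Fin n × Fin k, ‖w q ir‖ ^ 2)
              = ∑ i : Fin n, ‖v (i, q - d)‖ ^ 2 := by
            intro q
            rw [Fintype.sum_prod_type]
            refine Finset.sum_congr rfl fun i _ => ?_
            have hterm : ∀ r : Fin k, ‖w q (i, r)‖ ^ 2
                = if r = q then ‖v (i, q - d)‖ ^ 2 else 0 := fun r => by
              simp only [hw]
              split <;> simp
            rw [Finset.sum_congr rfl fun r _ => hterm r, Finset.sum_ite_eq' Finset.univ q]
            simp
          simp only [hwq]
          rw [Finset.sum_comm, Fintype.sum_prod_type]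
          refine Finset.sum_congr rfl fun i _ => ?_
          exact Equiv.sum_comp (Equiv.subRight d) (fun r => ‖v (i, r)‖ ^ 2)
  calc Real.sqrt (∑ i, ‖((Td X d)ᴴ *ᵥ v) i‖ ^ 2)
      ≤ Real.sqrt (‖X‖ ^ 2 * ∑ i, ‖v i‖ ^ 2) := Real.sqrt_le_sqrt hsum
    _ = ‖X‖ * Real.sqrt (∑ i, ‖v i‖ ^ 2) := by
        rw [Real.sqrt_mul (sq_nonneg _), Real.sqrt_sq (norm_nonneg _)]

/-- decomposition of the partial transpose (as a plain function on matrices) -/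
lemma PT_eq_sum (X : Matrix (Fin n × Fin k) (Fin n × Fin k) ℂ) :
    (Matrix.of fun ip jq => X (jq.1, ip.2) (ip.1, jq.2)
      : Matrix (Fin n × Fin k) (Fin n × Fin k) ℂ) = ∑ d : Fin k, Td X d := by
  ext ⟨i, p⟩ ⟨j, q⟩
  simp only [Matrix.of_apply, Matrix.sum_apply, Td]
  have hiff : ∀ d : Fin k, (q = p + d) ↔ (d = q - p) := fun d => by
    rw [← sub_eq_iff_eq_add', eq_comm]
  simp only [hiff]
  rw [Finset.sum_ite_eq' Finset.univ (q - p)]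
  simp

lemma PT_fun_norm_le (X : Matrix (Fin n × Fin k) (Fin n × Fin k) ℂ) :
    ‖(Matrix.of fun ip jq => X (jq.1, ip.2) (ip.1, jq.2)
      : Matrix (Fin n × Fin k) (Fin n × Fin k) ℂ)‖ ≤ k * ‖X‖ := by
  rw [PT_eq_sum X]
  calc ‖∑ d : Fin k, Td X d‖ ≤ ∑ d : Fin k, ‖Td X d‖ := norm_sum_le _ _
    _ ≤ ∑ _d : Fin k, ‖X‖ := Finset.sum_le_sum fun d _ => Td_norm_le X d
    _ = k * ‖X‖ := by simp [Finset.sum_const, nsmul_eq_mul]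

end Td

section Neg
variable {n : ℕ}

def Wmat (n : ℕ) : Matrix (Fin n × Fin n) (Fin n × Fin n) ℂ :=
  Matrix.of fun ap bq => if ap.1 = bq.2 ∧ bq.1 = ap.2 then 1 else 0

lemma Wmat_mulVec (v : (Fin n × Fin n) → ℂ) (a p : Fin n) :
    (Wmat n *ᵥ v) (a, p) = v (p, a) := by
  simp only [Matrix.mulVec, dotProduct, Wmat, Matrix.of_apply]
  have hterm : ∀ bq : Fin n × Fin n,
      (if a = bq.2 ∧ bq.1 = p then (1:ℂ) else 0) * v bq
        = if bq = (p, a) then v bq else 0 := by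
    rintro ⟨b, q⟩
    by_cases h1 : q = a <;> by_cases h2 : b = p <;> simp [h1, h2, Prod.ext_iff] <;> tauto
  rw [Finset.sum_congr rfl fun bq _ => hterm bq, Finset.sum_ite_eq' Finset.univ (p, a)]
  simp

lemma Wmat_norm_le_one : ‖Wmat n‖ ≤ 1 := by
  refine opnorm_le_of_mulVec _ _ zero_le_one fun v => ?_
  rw [one_mul]
  refine le_of_eq ?_
  congr 1
  calc ∑ i : Fin n × Fin n, ‖(Wmat n *ᵥ v) i‖ ^ 2
      = ∑ i : Fin n × Fin n, ‖v (i.2, i.1)‖ ^ 2 := by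
        refine Finset.sum_congr rfl fun ⟨a, p⟩ _ => ?_
        rw [Wmat_mulVec v a p]
    _ = ∑ i : Fin n × Fin n, ‖v i‖ ^ 2 :=
        Equiv.sum_comp (Equiv.prodComm (Fin n) (Fin n)) (fun x => ‖v x‖ ^ 2)

def Mmat (n : ℕ) : Matrix (Fin n × Fin n) (Fin n × Fin n) ℂ :=
  Matrix.of fun ap bq => if ap.1 = ap.2 ∧ bq.1 = bq.2 then 1 else 0

lemma PT_Wmat : (Matrix.of fun ip jq => Wmat n (jq.1, ip.2) (ip.1, jq.2)
    : Matrix (Fin n × Fin n) (Fin n × Fin n) ℂ) = Mmat n := by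
  ext ⟨i, p⟩ ⟨j, q⟩
  simp [Wmat, Mmat, and_comm]

lemma Mmat_norm_ge (hn : 0 < n) : (n : ℝ) ≤ ‖Mmat n‖ := by
  set v0 : (Fin n × Fin n) → ℂ := fun bq => if bq.1 = bq.2 then 1 else 0 with hv0
  have hmv : ∀ a p : Fin n, (Mmat n *ᵥ v0) (a, p) = if a = p then (n : ℂ) else 0 := by
    intro a p
    simp only [Matrix.mulVec, dotProduct, Mmat, Matrix.of_apply, hv0]
    have hterm : ∀ bq : Fin n × Fin n,
        (if a = p ∧ bq.1 = bq.2 then (1:ℂ) else 0) * (if bq.1 = bq.2 then 1 else 0)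
          = if a = p then (if bq.1 = bq.2 then 1 else 0) else 0 := fun bq => by
      by_cases h1 : a = p <;> by_cases h2 : bq.1 = bq.2 <;> simp [h1, h2]
    rw [Finset.sum_congr rfl fun bq _ => hterm bq]
    by_cases h : a = p
    · simp only [h, if_true]
      rw [Fintype.sum_prod_type]
      simp [Finset.sum_ite_eq]
    · simp [h]
  have h1 : (∑ i : Fin n × Fin n, ‖(Mmat n *ᵥ v0) i‖ ^ 2) = n ^ 3 := by
    calc (∑ i : Fin n × Fin n, ‖(Mmat n *ᵥ v0) i‖ ^ 2)
        = ∑ i : Fin n × Fin n, (if i.1 = i.2 then ((n:ℝ)) ^ 2 else 0) := by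
          refine Finset.sum_congr rfl fun ⟨a, p⟩ _ => ?_
          rw [hmv a p]
          by_cases h : a = p <;> simp [h]
      _ = n * (n : ℝ) ^ 2 := by
          rw [Fintype.sum_prod_type]
          simp [Finset.sum_ite_eq]
      _ = n ^ 3 := by ring
  have h2 : (∑ i : Fin n × Fin n, ‖v0 i‖ ^ 2) = n := by
    calc (∑ i : Fin n × Fin n, ‖v0 i‖ ^ 2)
        = ∑ i : Fin n × Fin n, (if i.1 = i.2 then (1:ℝ) else 0) := by
          refine Finset.sum_congr rfl fun ⟨a, p⟩ _ => ?_
          by_cases h : a = p <;> simp [hv0, h]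
      _ = n := by
          rw [Fintype.sum_prod_type]
          simp [Finset.sum_ite_eq]
  have h3 := mulVec_le_opnorm (Mmat n) v0
  rw [h1, h2] at h3
  have hs3 : Real.sqrt ((n:ℝ) ^ 3) = n * Real.sqrt n := by
    rw [show ((n:ℝ))^3 = (n:ℝ)^2 * n by ring, Real.sqrt_mul (sq_nonneg _),
      Real.sqrt_sq (Nat.cast_nonneg n)]
  rw [hs3] at h3
  have hsn : 0 < Real.sqrt n := Real.sqrt_pos.mpr (by exact_mod_cast hn)
  exact le_of_mul_le_mul_right h3 hsn

end Neg

lemma PT_apply (n k : ℕ) (X : Matrix (Fin n × Fin k) (Fin n × Fin k) ℂ) :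
    PT n k X = Matrix.of fun ip jq => X (jq.1, ip.2) (ip.1, jq.2) := rfl

/-- `φ : Mₙ(ℂ) → Mₙ(ℂ)` is `k`-contractive: its amplification `φ ⊗ id_{M_k}` has norm
at most `1`, with respect to the operator (C*-) norms on matrices. -/
def KContractiveMat {n : ℕ} (k : ℕ)
    (φ : Matrix (Fin n) (Fin n) ℂ →ₗ[ℂ] Matrix (Fin n) (Fin n) ℂ) : Prop :=
  ∀ T, IsAmplification φ k T → ∀ X, ‖T X‖ ≤ ‖X‖

/-- For `n ≥ 2`, the rescaled transpose map `(1/(n-1))·τₙ : Mₙ(ℂ) → Mₙ(ℂ)`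
is `(n-1)`-contractive but not `n`-contractive. -/
theorem stmt1 (n : ℕ) (hn : 2 ≤ n) :
    KContractiveMat (n - 1) ((1 / ((n : ℂ) - 1)) • transposeLM n) ∧
      ¬ KContractiveMat n ((1 / ((n : ℂ) - 1)) • transposeLM n) := by
  have hn1 : (1:ℝ) ≤ (n:ℝ) - 1 := by
    have h2 : (2:ℝ) ≤ (n:ℝ) := by exact_mod_cast hn
    linarith
  have hcast : ((n - 1 : ℕ) : ℝ) = (n:ℝ) - 1 := by
    rw [Nat.cast_sub (by omega : 1 ≤ n)]; norm_num
  have hc : ‖(1 / ((n : ℂ) - 1))‖ = 1 / ((n:ℝ) - 1) := by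
    rw [norm_div, norm_one]
    congr 1
    have h : (n:ℂ) - 1 = ((n - 1 : ℕ) : ℂ) := by
      rw [Nat.cast_sub (by omega : 1 ≤ n)]; norm_num
    rw [h, RCLike.norm_natCast, hcast]
  constructor
  · intro T hT X
    haveI : NeZero (n - 1) := ⟨by omega⟩
    have hTeq : T = (1 / ((n : ℂ) - 1)) • PT n (n - 1) :=
      amplification_unique _ _ _ hT (isAmplification_smul_PT n (n - 1) _)
    rw [hTeq, LinearMap.smul_apply, norm_smul, hc]
    have hPT : ‖PT n (n - 1) X‖ ≤ ((n - 1 : ℕ) : ℝ) * ‖X‖ := by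
      rw [PT_apply]; exact PT_fun_norm_le X
    rw [hcast] at hPT
    calc 1 / ((n:ℝ) - 1) * ‖PT n (n - 1) X‖
        ≤ 1 / ((n:ℝ) - 1) * (((n:ℝ) - 1) * ‖X‖) := by
          apply mul_le_mul_of_nonneg_left hPT (by positivity)
      _ = ‖X‖ := by field_simp
  · intro hcon
    have hamp := isAmplification_smul_PT n n (1 / ((n : ℂ) - 1))
    have hle := hcon _ hamp (Wmat n)
    have hTW : ((1 / ((n : ℂ) - 1)) • PT n n) (Wmat n) = (1 / ((n : ℂ) - 1)) • Mmat n := by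
      rw [LinearMap.smul_apply, PT_apply, PT_Wmat]
    rw [hTW] at hle
    have h2 := Mmat_norm_ge (n := n) (by omega)
    have h3 := Wmat_norm_le_one (n := n)
    have hkey : (n:ℝ)/((n:ℝ) - 1) ≤ 1 := by
      calc (n:ℝ)/((n:ℝ) - 1) = (1/((n:ℝ) - 1)) * n := by ring
        _ ≤ (1/((n:ℝ) - 1)) * ‖Mmat n‖ := by
            apply mul_le_mul_of_nonneg_left h2 (by positivity)
        _ = ‖(1/((n:ℂ) - 1)) • Mmat n‖ := by rw [norm_smul, hc]
        _ ≤ ‖Wmat n‖ := hle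
        _ ≤ 1 := h3
    have hgt : (1:ℝ) < (n:ℝ)/((n:ℝ) - 1) := by
      rw [lt_div_iff₀ (by linarith)]
      linarith
    linarith


end
end

section
/- Let A be a unital C*-algebra. Suppose there exist nets of contractive positive linear maps φ_α : A → F_α and ψ_α : F_α → A, with each F_α a finite-dimensional abelian C*-algebra, such that ‖x − ψ_α(φ_α(x))‖ → 0 for all x ∈ A. Then A is abelian (commutative). -/
noncomputable section

open Filter Topology

/-- An element of a `*`-ring is positive if it is of the form `star b * b`. -/
def IsPosElem {A : Type*} [NonUnitalSemiring A] [StarRing A] (a : A) : Prop :=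
  ∃ b, a = star b * b

/-- A net (indexed by a nonempty directed preorder) of finite-dimensional *abelian*
C*-algebras `F i` and contractive positive linear maps `φ i : A → F i`, `ψ i : F i → A`
such that `‖x - ψ i (φ i x)‖ → 0` for every `x ∈ A`. -/
structure AbelianApproxNet (A : Type) [CStarAlgebra A] where
  ι : Type
  [pre : Preorder ι]
  [ne : Nonempty ι]
  directed : ∀ a b : ι, ∃ c, a ≤ c ∧ b ≤ c
  F : ι → Type
  [instF : ∀ i, CStarAlgebra (F i)]
  findim : ∀ i, FiniteDimensional ℂ (F i)
  abelian : ∀ i, ∀ x y : F i, x * y = y * x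
  φ : ∀ i, A →ₗ[ℂ] F i
  φ_contr : ∀ i, ∀ x, ‖φ i x‖ ≤ ‖x‖
  φ_pos : ∀ i, ∀ a : A, IsPosElem a → IsPosElem (φ i a)
  ψ : ∀ i, F i →ₗ[ℂ] A
  ψ_contr : ∀ i, ∀ y, ‖ψ i y‖ ≤ ‖y‖
  ψ_pos : ∀ i, ∀ y : F i, IsPosElem y → IsPosElem (ψ i y)
  approx : ∀ x : A, Filter.Tendsto (fun i => ‖x - ψ i (φ i x)‖) Filter.atTop (𝓝 0)

section Lemmas
variable {A : Type*} [CStarAlgebra A] [PartialOrder A] [StarOrderedRing A]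

lemma isPosElem_iff_nonneg {a : A} : IsPosElem a ↔ 0 ≤ a := by
  constructor
  · rintro ⟨b, rfl⟩; exact star_mul_self_nonneg b
  · intro h
    refine ⟨CFC.sqrt a, ?_⟩
    rw [(IsSelfAdjoint.of_nonneg (CFC.sqrt_nonneg a)).star_eq, CFC.sqrt_mul_sqrt_self a h]

lemma csmul_nonneg {c : ℝ} (hc : 0 ≤ c) {a : A} (ha : 0 ≤ a) : 0 ≤ (c : ℂ) • a := by
  obtain ⟨b, rfl⟩ := isPosElem_iff_nonneg.mpr ha
  have : (c:ℂ) • (star b * b) = star ((Real.sqrt c : ℂ) • b) * ((Real.sqrt c : ℂ) • b) := by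
    rw [star_smul, smul_mul_smul_comm]
    congr 1
    rw [Complex.star_def, Complex.conj_ofReal, ← Complex.ofReal_mul, Real.mul_self_sqrt hc]
  rw [this]
  exact star_mul_self_nonneg _

lemma coe_smul_one (r : ℝ) : (r : ℂ) • (1 : A) = algebraMap ℝ A r := by
  rw [Algebra.algebraMap_eq_smul_one, Complex.coe_smul]

end Lemmas

section omega
variable {A : Type*} [CStarAlgebra A] [PartialOrder A] [StarOrderedRing A]
variable (ω : A →ₗ[ℂ] ℂ) (hpos : ∀ a : A, IsPosElem a → ∃ r : ℝ, 0 ≤ r ∧ ω a = r)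

include hpos in
lemma omega_real_on_sa {a : A} (ha : IsSelfAdjoint a) : ∃ r : ℝ, ω a = r := by
  set n : A := (‖a‖ : ℂ) • 1 with hn
  have h1 : IsPosElem (((2⁻¹ : ℝ) : ℂ) • (n + a) : A) := by
    rw [isPosElem_iff_nonneg]
    have hna : 0 ≤ n + a := by
      have h := sub_nonneg.mpr (ha.neg).le_algebraMap_norm_self
      rw [norm_neg, sub_neg_eq_add] at h
      rw [hn, coe_smul_one, add_comm] at *
      exact h
    exact csmul_nonneg (by norm_num) hna
  have h2 : IsPosElem (((2⁻¹ : ℝ) : ℂ) • (n - a) : A) := by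
    rw [isPosElem_iff_nonneg]
    have hna : 0 ≤ n - a := by
      have h := sub_nonneg.mpr ha.le_algebraMap_norm_self
      rw [hn, coe_smul_one]
      exact h
    exact csmul_nonneg (by norm_num) hna
  obtain ⟨r1, -, hr1⟩ := hpos _ h1
  obtain ⟨r2, -, hr2⟩ := hpos _ h2
  refine ⟨r1 - r2, ?_⟩
  have key : a = ((2⁻¹ : ℝ) : ℂ) • (n + a) - ((2⁻¹ : ℝ) : ℂ) • (n - a) := by
    push_cast
    module
  rw [key, map_sub, hr1, hr2]
  push_cast
  ring

include hpos in
lemma omega_star (x : A) : ω (star x) = starRingEnd ℂ (ω x) := by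
  have hconj2 : starRingEnd ℂ (2⁻¹ : ℂ) = 2⁻¹ := by
    simp [Complex.ext_iff]
  have hsa : IsSelfAdjoint ((2⁻¹ : ℂ) • (x + star x)) := by
    rw [IsSelfAdjoint, star_smul, star_add, star_star, Complex.star_def, hconj2, add_comm]
  have hsb : IsSelfAdjoint ((-(2⁻¹ : ℂ) * Complex.I) • (x - star x)) := by
    rw [IsSelfAdjoint, star_smul, star_sub, star_star, Complex.star_def, map_mul, map_neg,
      Complex.conj_I, hconj2]
    module
  have hIb : Complex.I • ((-(2⁻¹ : ℂ) * Complex.I) • (x - star x))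
      = (2⁻¹ : ℂ) • x - (2⁻¹ : ℂ) • star x := by
    rw [smul_smul]
    have hco : Complex.I * (-(2⁻¹:ℂ) * Complex.I) = (2⁻¹ : ℂ) := by
      rw [mul_comm, mul_assoc, neg_mul, Complex.I_mul_I]; ring
    rw [hco]
    module
  have hx : x = (2⁻¹ : ℂ) • (x + star x) + Complex.I • ((-(2⁻¹ : ℂ) * Complex.I) • (x - star x)) := by
    rw [hIb]; module
  have hxs : star x = (2⁻¹ : ℂ) • (x + star x) - Complex.I • ((-(2⁻¹ : ℂ) * Complex.I) • (x - star x)) := by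
    rw [hIb]; module
  obtain ⟨r, hr⟩ := omega_real_on_sa ω hpos hsa
  obtain ⟨s, hs⟩ := omega_real_on_sa ω hpos hsb
  have e1 : ω x = (r : ℂ) + Complex.I * s := by
    conv_lhs => rw [hx]
    rw [map_add, hr, map_smul, hs, smul_eq_mul]
  have e2 : ω (star x) = (r : ℂ) - Complex.I * s := by
    conv_lhs => rw [hxs]
    rw [map_sub, hr, map_smul, hs, smul_eq_mul]
  rw [e1, e2]
  simp [Complex.ext_iff]

include hpos in
lemma omega_cs (hcontr : ‖ω 1‖ ≤ 1) (x : A) :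
    ∃ r : ℝ, 0 ≤ r ∧ ω (star x * x) = (r : ℂ) ∧ Complex.normSq (ω x) ≤ r := by
  obtain ⟨r, hr0, hr⟩ := hpos _ ⟨x, rfl⟩
  refine ⟨r, hr0, hr, ?_⟩
  obtain ⟨w1, hw10, hw1⟩ := hpos 1 ⟨1, by simp⟩
  have hw1le : w1 ≤ 1 := by
    rw [hw1] at hcontr
    simpa [Complex.norm_real, abs_le] using (abs_le.mp (by simpa using hcontr)).2
  obtain ⟨c, hc⟩ : ∃ c : ℂ, c = -(ω x) := ⟨_, rfl⟩
  have hyexp : star (c • 1 + x) * (c • 1 + x)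
      = (starRingEnd ℂ c * c) • (1:A) + (starRingEnd ℂ c) • x + c • star x + star x * x := by
    rw [star_add, star_smul, star_one, Complex.star_def]
    simp only [add_mul, mul_add, smul_mul_assoc, mul_smul_comm, smul_smul, smul_add, one_mul, mul_one]
    rw [mul_comm c]
    abel
  obtain ⟨s, hs0, hsval⟩ := hpos _ ⟨c • 1 + x, rfl⟩
  rw [hyexp] at hsval
  have hsval2 : ((Complex.normSq (ω x) * w1 - 2 * Complex.normSq (ω x) + r : ℝ) : ℂ) = (s : ℂ) := by
    rw [← hsval, map_add, map_add, map_add, map_smul, map_smul, map_smul, hr, hw1,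
      omega_star ω hpos x, hc]
    have hnq : (starRingEnd ℂ) (ω x) * (ω x) = (Complex.normSq (ω x) : ℂ) := by
      rw [Complex.normSq_eq_conj_mul_self]
    simp only [smul_eq_mul, map_neg, neg_mul, mul_neg, neg_neg]
    rw [hnq, Complex.mul_conj]
    push_cast
    ring
  have hfin : Complex.normSq (ω x) * w1 - 2 * Complex.normSq (ω x) + r = s := by
    exact_mod_cast hsval2
  nlinarith [Complex.normSq_nonneg (ω x)]

end omega

section opcs
variable {A : Type*} [CStarAlgebra A] [PartialOrder A] [StarOrderedRing A]

lemma expand_aux (c : ℂ) (f z e : A) (hsa : IsSelfAdjoint f) (hf : f * f = e) :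
    star (c • f - f * z) * (c • f - f * z)
      = (starRingEnd ℂ c * c) • e - starRingEnd ℂ c • (e * z)
        - c • (star z * e) + star z * e * z := by
  rw [star_sub, star_smul, star_mul, hsa.star_eq, Complex.star_def]
  simp only [sub_mul, mul_sub, smul_mul_assoc, mul_smul_comm, smul_smul, mul_assoc]
  rw [← mul_assoc f f z, hf]
  simp only [smul_sub, smul_smul, mul_assoc]
  rw [mul_comm c]
  abel

lemma op_cs {κ : Type*} [Fintype κ] (e : κ → A) (he : ∀ k, 0 ≤ e k)
    (hS : ∑ k, e k ≤ 1) (t : κ → ℂ) :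
    star (∑ k, t k • e k) * (∑ k, t k • e k) ≤ ∑ k, (starRingEnd ℂ (t k) * t k) • e k := by
  classical
  obtain ⟨f, hfdef⟩ : ∃ f : κ → A, f = fun k => CFC.sqrt (e k) := ⟨_, rfl⟩
  have hf : ∀ k, f k * f k = e k := by
    intro k; rw [hfdef]; exact CFC.sqrt_mul_sqrt_self (e k) (he k)
  have hfsa : ∀ k, IsSelfAdjoint (f k) := by
    intro k; rw [hfdef]; exact IsSelfAdjoint.of_nonneg (CFC.sqrt_nonneg _)
  have hesa : ∀ k, star (e k) = e k := fun k => (IsSelfAdjoint.of_nonneg (he k)).star_eq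
  obtain ⟨z, hz⟩ : ∃ z : A, z = ∑ k, t k • e k := ⟨_, rfl⟩
  obtain ⟨S, hSdef⟩ : ∃ S : A, S = ∑ k, e k := ⟨_, rfl⟩
  rw [← hSdef] at hS
  rw [← hz]
  have hstarz : star z = ∑ k, starRingEnd ℂ (t k) • e k := by
    rw [hz, star_sum]
    exact Finset.sum_congr rfl fun k _ => by rw [star_smul, hesa k, Complex.star_def]
  have hb : star z * z = ∑ k, starRingEnd ℂ (t k) • (e k * z) := by
    rw [hstarz, Finset.sum_mul]
    exact Finset.sum_congr rfl fun k _ => smul_mul_assoc _ _ _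
  have hcc : star z * z = ∑ k, t k • (star z * e k) := by
    nth_rewrite 2 [hz]
    rw [Finset.mul_sum]
    exact Finset.sum_congr rfl fun k _ => mul_smul_comm _ _ _
  have hd : star z * S * z = ∑ k, star z * e k * z := by
    rw [hSdef, Finset.mul_sum, Finset.sum_mul]
  have key : (0:A) ≤ ∑ k, star (t k • f k - f k * z) * (t k • f k - f k * z) :=
    Finset.sum_nonneg fun k _ => star_mul_self_nonneg _
  have sumEq : ∑ k, star (t k • f k - f k * z) * (t k • f k - f k * z)
      = (∑ k, (starRingEnd ℂ (t k) * t k) • e k) - star z * z - star z * z + star z * S * z := by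
    rw [Finset.sum_congr rfl fun k _ => expand_aux (t k) (f k) z (e k) (hfsa k) (hf k),
      Finset.sum_add_distrib, Finset.sum_sub_distrib, Finset.sum_sub_distrib,
      ← hb, ← hcc, ← hd]
  have h2 : star z * S * z ≤ star z * 1 * z := star_left_conjugate_le_conjugate hS z
  rw [mul_one] at h2
  have h3 := add_nonneg (sumEq ▸ key) (sub_nonneg.mpr h2)
  have h4 : ((∑ k, (starRingEnd ℂ (t k) * t k) • e k) - star z * z - star z * z + star z * S * z)
      + (star z * z - star z * S * z) = (∑ k, (starRingEnd ℂ (t k) * t k) • e k) - star z * z := by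
    abel
  rw [h4] at h3
  exact sub_nonneg.mp h3
end opcs

section perindex
open WeakDual

lemma characterSpace_finite (F : Type*) [CommCStarAlgebra F] [FiniteDimensional ℂ F] :
    Finite (characterSpace ℂ F) := by
  set X := characterSpace ℂ F
  let toMH : X → (F →* ℂ) := fun χ =>
    { toFun := χ, map_one' := map_one χ, map_mul' := map_mul χ }
  have hinj : Function.Injective toMH := by
    intro χ1 χ2 h
    ext x
    exact congrFun (congrArg (fun m : F →* ℂ => (m : F → ℂ)) h) x
  have li1 : LinearIndependent ℂ (fun χ : X => (χ : F → ℂ)) := by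
    have := (linearIndependent_monoidHom F ℂ).comp toMH hinj
    exact this
  let dualFam : X → Module.Dual ℂ F := fun χ =>
    ((χ : WeakDual ℂ F) : F →L[ℂ] ℂ).toLinearMap
  have li2 : LinearIndependent ℂ dualFam := by
    apply LinearIndependent.of_comp (LinearMap.ltoFun ℂ F ℂ ℂ)
    exact li1
  exact li2.finite_of_isNoetherian

variable {A : Type*} [CStarAlgebra A] [PartialOrder A] [StarOrderedRing A]

lemma theta_ineq (F : Type*) [CStarAlgebra F] [FiniteDimensional ℂ F]
    (hcomm : ∀ x y : F, x * y = y * x)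
    (φ : A →ₗ[ℂ] F) (ψ : F →ₗ[ℂ] A)
    (hφc : ∀ x, ‖φ x‖ ≤ ‖x‖) (hφp : ∀ a, IsPosElem a → IsPosElem (φ a))
    (hψc : ∀ y, ‖ψ y‖ ≤ ‖y‖) (hψp : ∀ y, IsPosElem y → IsPosElem (ψ y))
    (hA1 : ‖(1:A)‖ ≤ 1) (z : A) :
    ψ (φ z) * star (ψ (φ z)) ≤ ψ (φ (star z * z)) := by
  classical
  letI : CommCStarAlgebra F := { ‹CStarAlgebra F› with mul_comm := hcomm }
  haveI : Finite (characterSpace ℂ F) := characterSpace_finite F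
  haveI : Fintype (characterSpace ℂ F) := Fintype.ofFinite _
  set X := characterSpace ℂ F with hX
  set G := gelfandStarTransform F with hG
  -- delta functions
  let δ : X → C(X, ℂ) := fun t => ⟨fun s => if s = t then 1 else 0, continuous_of_discreteTopology⟩
  have hδapp : ∀ t s, δ t s = if s = t then 1 else 0 := fun t s => rfl
  have hδstar : ∀ t, star (δ t) * δ t = δ t := by
    intro t
    ext s
    by_cases h : s = t <;>
      simp [ContinuousMap.mul_apply, ContinuousMap.star_apply, hδapp, h]
  have hδsum : (∑ t, δ t) = 1 := by
    ext s
    simp [ContinuousMap.sum_apply, hδapp]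
  have hgdecomp : ∀ g : C(X, ℂ), g = ∑ t, g t • δ t := by
    intro g
    ext s
    simp [ContinuousMap.sum_apply, hδapp, mul_ite]
  -- projections
  let p : X → F := fun t => G.symm (δ t)
  have hppos : ∀ t, IsPosElem (p t) := by
    intro t
    refine ⟨p t, ?_⟩
    rw [show star (p t) = G.symm (star (δ t)) from (map_star G.symm (δ t)).symm,
      ← map_mul, hδstar]
  have hpsum : (∑ t, p t) = 1 := by
    rw [show (∑ t, p t) = G.symm (∑ t, δ t) from (map_sum G.symm δ Finset.univ).symm, hδsum,
      map_one]
  have hfdecomp : ∀ f : F, f = ∑ t, (G f t) • p t := by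
    intro f
    conv_lhs => rw [← G.symm_apply_apply f, hgdecomp (G f)]
    rw [map_sum]
    exact Finset.sum_congr rfl fun t _ => by rw [map_smul]
  -- functionals
  let ω : X → (A →ₗ[ℂ] ℂ) := fun t =>
    { toFun := fun x => G (φ x) t
      map_add' := fun x y => by simp only [map_add, ContinuousMap.add_apply]
      map_smul' := fun c x => by
        simp only [map_smul, ContinuousMap.smul_apply, smul_eq_mul, RingHom.id_apply] }
  have hωapp : ∀ t x, ω t x = G (φ x) t := fun t x => rfl
  have hωpos : ∀ t, ∀ a : A, IsPosElem a → ∃ r : ℝ, 0 ≤ r ∧ ω t a = r := by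
    intro t a ha
    obtain ⟨b, hb⟩ := hφp a ha
    refine ⟨Complex.normSq (G b t), Complex.normSq_nonneg _, ?_⟩
    rw [hωapp, hb, map_mul, show G (star b) = star (G b) from map_star G b,
      ContinuousMap.mul_apply, ContinuousMap.star_apply, Complex.star_def,
      ← Complex.normSq_eq_conj_mul_self]
  have hGnorm : ∀ f : F, ‖G f‖ = ‖f‖ := by
    intro f
    exact (gelfandTransform_isometry F).norm_map_of_map_zero (map_zero _) f
  have hωcontr : ∀ t x, ‖ω t x‖ ≤ ‖x‖ := by
    intro t x
    calc ‖ω t x‖ = ‖G (φ x) t‖ := by rw [hωapp]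
    _ ≤ ‖G (φ x)‖ := ContinuousMap.norm_coe_le_norm _ t
    _ = ‖φ x‖ := hGnorm _
    _ ≤ ‖x‖ := hφc x
  have hωone : ∀ t, ‖ω t 1‖ ≤ 1 := fun t => (hωcontr t 1).trans hA1
  -- positive elements e t
  let e : X → A := fun t => ψ (p t)
  have hepos : ∀ t, 0 ≤ e t := fun t => isPosElem_iff_nonneg.mp (hψp _ (hppos t))
  have hone : (0:A) ≤ 1 := by simpa using star_mul_self_nonneg (1:A)
  have hF1 : ‖(1:F)‖ ≤ 1 := by
    rcases subsingleton_or_nontrivial F with h | h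
    · rw [Subsingleton.elim (1:F) 0, norm_zero]; norm_num
    · rw [CStarRing.norm_one]
  have hSle1 : (∑ t, e t) ≤ 1 := by
    have hsum : (∑ t, e t) = ψ 1 := by
      rw [show (∑ t, e t) = ψ (∑ t, p t) from (map_sum ψ p Finset.univ).symm, hpsum]
    rw [hsum]
    have h0 : 0 ≤ ψ 1 := isPosElem_iff_nonneg.mp (hψp 1 ⟨1, by rw [star_one, one_mul]⟩)
    have hn : ‖ψ (1:F)‖ ≤ 1 := (hψc 1).trans hF1
    calc ψ (1:F) ≤ algebraMap ℝ A ‖ψ (1:F)‖ := (IsSelfAdjoint.of_nonneg h0).le_algebraMap_norm_self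
    _ ≤ 1 := by
        have : (0:A) ≤ 1 - algebraMap ℝ A ‖ψ (1:F)‖ := by
          rw [show (1:A) - algebraMap ℝ A ‖ψ (1:F)‖ = ((1 - ‖ψ (1:F)‖ : ℝ) : ℂ) • 1 from by
            rw [coe_smul_one, map_sub, map_one (algebraMap ℝ A)]]
          exact csmul_nonneg (by linarith) hone
        exact sub_nonneg.mp this
  have htheta : ∀ x : A, ψ (φ x) = ∑ t, (ω t x) • e t := by
    intro x
    conv_lhs => rw [hfdecomp (φ x)]
    rw [map_sum]
    exact Finset.sum_congr rfl fun t _ => by rw [map_smul]; rfl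
  have hesa : ∀ t, star (e t) = e t := fun t => (IsSelfAdjoint.of_nonneg (hepos t)).star_eq
  have hw : star (ψ (φ z)) = ∑ t, (starRingEnd ℂ ((ω t) z)) • e t := by
    rw [htheta z, star_sum]
    exact Finset.sum_congr rfl fun t _ => by rw [star_smul, hesa t, Complex.star_def]
  choose r hr0 hreq hrge using fun t => omega_cs (ω t) (hωpos t) (hωone t) z
  have step1 : ψ (φ z) * star (ψ (φ z))
      ≤ ∑ t, (starRingEnd ℂ (starRingEnd ℂ ((ω t) z)) * (starRingEnd ℂ ((ω t) z))) • e t := by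
    have h := op_cs e hepos hSle1 (fun t => starRingEnd ℂ ((ω t) z))
    rw [← hw] at h
    rwa [star_star] at h
  have step2 : (∑ t, (starRingEnd ℂ (starRingEnd ℂ ((ω t) z)) * (starRingEnd ℂ ((ω t) z))) • e t)
      ≤ ∑ t, ((r t : ℂ)) • e t := by
    apply Finset.sum_le_sum
    intro t _
    have hcoef : starRingEnd ℂ (starRingEnd ℂ ((ω t) z)) * (starRingEnd ℂ ((ω t) z))
        = ((Complex.normSq ((ω t) z) : ℝ) : ℂ) := by
      rw [Complex.conj_conj, Complex.mul_conj]
    rw [hcoef, ← sub_nonneg, ← sub_smul, show ((r t : ℂ)) - ((Complex.normSq ((ω t) z) : ℝ) : ℂ)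
        = ((r t - Complex.normSq ((ω t) z) : ℝ) : ℂ) from by push_cast; ring]
    exact csmul_nonneg (by linarith [hrge t]) (hepos t)
  have step3 : (∑ t, ((r t : ℂ)) • e t) = ψ (φ (star z * z)) := by
    rw [htheta (star z * z)]
    exact Finset.sum_congr rfl fun t _ => by rw [hreq t]
  calc ψ (φ z) * star (ψ (φ z)) ≤ _ := step1
  _ ≤ _ := step2
  _ = _ := step3
end perindex

section decomp
variable {A : Type*} [CStarAlgebra A]

lemma sa_decomp (x : A) : ∃ a b : A, IsSelfAdjoint a ∧ IsSelfAdjoint b ∧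
    x = a + Complex.I • b ∧ star x = a - Complex.I • b := by
  have hconj2 : starRingEnd ℂ (2⁻¹ : ℂ) = 2⁻¹ := by simp [Complex.ext_iff]
  refine ⟨(2⁻¹ : ℂ) • (x + star x), (-(2⁻¹ : ℂ) * Complex.I) • (x - star x), ?_, ?_, ?_, ?_⟩
  · rw [IsSelfAdjoint, star_smul, star_add, star_star, Complex.star_def, hconj2, add_comm]
  · rw [IsSelfAdjoint, star_smul, star_sub, star_star, Complex.star_def, map_mul, map_neg,
      Complex.conj_I, hconj2]
    module
  all_goals {
    have hIb : Complex.I • ((-(2⁻¹ : ℂ) * Complex.I) • (x - star x))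
        = (2⁻¹ : ℂ) • x - (2⁻¹ : ℂ) • star x := by
      rw [smul_smul]
      have hco : Complex.I * (-(2⁻¹:ℂ) * Complex.I) = (2⁻¹ : ℂ) := by
        rw [mul_comm, mul_assoc, neg_mul, Complex.I_mul_I]; ring
      rw [hco]
      module
    rw [hIb]; module }
end decomp


/-- Let `A` be a unital C*-algebra.  If there are nets of contractive
positive linear maps `φ_α : A → F_α` and `ψ_α : F_α → A` through finite-dimensional
abelian C*-algebras `F_α` with `‖x − ψ_α (φ_α x)‖ → 0` for all `x ∈ A`, then `A` is
abelian. -/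
theorem stmt17 (A : Type) [CStarAlgebra A] (h : Nonempty (AbelianApproxNet A)) :
    ∀ x y : A, x * y = y * x := by
  obtain ⟨N⟩ := h
  letI := N.pre
  haveI := N.ne
  letI : ∀ i, CStarAlgebra (N.F i) := fun i => N.instF i
  rcases subsingleton_or_nontrivial A with hA | hA
  · intro x y; exact Subsingleton.elim _ _
  letI : PartialOrder A := CStarAlgebra.spectralOrder A
  haveI : StarOrderedRing A := CStarAlgebra.spectralOrderedRing A
  haveI : IsDirected N.ι (· ≤ ·) := ⟨N.directed⟩
  have hA1 : ‖(1:A)‖ ≤ 1 := le_of_eq CStarRing.norm_one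
  have hnormal : ∀ z : A, z * star z ≤ star z * z := by
    intro z
    have happrox : ∀ w : A, Tendsto (fun i => N.ψ i (N.φ i w)) atTop (𝓝 w) := by
      intro w
      rw [tendsto_iff_norm_sub_tendsto_zero]
      simpa [norm_sub_rev] using N.approx w
    have h1 : Tendsto
        (fun i => N.ψ i (N.φ i (star z * z)) - N.ψ i (N.φ i z) * star (N.ψ i (N.φ i z)))
        atTop (𝓝 (star z * z - z * star z)) :=
      (happrox _).sub ((happrox z).mul ((happrox z).star))
    have hmem : ∀ i, (N.ψ i (N.φ i (star z * z)) - N.ψ i (N.φ i z) * star (N.ψ i (N.φ i z)))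
        ∈ {a : A | 0 ≤ a} := by
      intro i
      haveI := N.findim i
      have := theta_ineq (N.F i) (N.abelian i) (N.φ i) (N.ψ i) (N.φ_contr i) (N.φ_pos i)
        (N.ψ_contr i) (N.ψ_pos i) hA1 z
      simpa [Set.mem_setOf_eq, sub_nonneg] using this
    have hlim := (CStarAlgebra.isClosed_nonneg (A := A)).mem_of_tendsto h1
      (Filter.Eventually.of_forall hmem)
    rw [Set.mem_setOf_eq] at hlim
    exact sub_nonneg.mp hlim
  have hnorm_eq : ∀ z : A, star z * z = z * star z := by
    intro z
    refine le_antisymm ?_ (hnormal z)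
    have := hnormal (star z)
    rwa [star_star] at this
  have hsa_comm : ∀ a b : A, IsSelfAdjoint a → IsSelfAdjoint b → a * b = b * a := by
    intro a b ha hb
    have h := hnorm_eq (a + Complex.I • b)
    have hstar : star (a + Complex.I • b) = a - Complex.I • b := by
      rw [star_add, ha.star_eq, star_smul, hb.star_eq, Complex.star_def, Complex.conj_I]
      module
    rw [hstar] at h
    have h2 : ((2:ℂ) * Complex.I) • (a * b - b * a) = 0 := by
      have hexp : ((2:ℂ) * Complex.I) • (a * b - b * a)
          = (a - Complex.I • b) * (a + Complex.I • b)
            - (a + Complex.I • b) * (a - Complex.I • b) := by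
        simp only [mul_add, add_mul, sub_mul, mul_sub, smul_mul_assoc, mul_smul_comm, smul_smul,
          smul_sub, smul_add, Complex.I_mul_I]
        module
      rw [hexp, h, sub_self]
    rcases smul_eq_zero.mp h2 with hc | hc
    · exfalso
      have : (2:ℂ) * Complex.I ≠ 0 := by
        simp [Complex.ext_iff]
      exact this hc
    · exact sub_eq_zero.mp hc
  intro x y
  obtain ⟨a, b, ha, hb, hx, -⟩ := sa_decomp x
  obtain ⟨c, d, hc, hd, hy, -⟩ := sa_decomp y
  rw [hx, hy]
  simp only [mul_add, add_mul, smul_mul_assoc, mul_smul_comm, smul_smul, smul_add]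
  rw [hsa_comm a c ha hc, hsa_comm a d ha hd, hsa_comm b c hb hc, hsa_comm b d hb hd]
  abel


end
end

section
/- Let A be a unital C*-algebra and suppose the canonical anti-homomorphism ι : A → A^op (the identity on underlying sets, reversing multiplication) is completely positive (equivalently 3-positive suffices). Then A is abelian. -/
noncomputable section

/-- A linear map `φ : A → B` between `*`-algebras is `k`-positive if
`φ ⊗ id_{M_k} : M_k(A) → M_k(B)` (i.e. the entrywise application of `φ`)
maps positive elements to positive elements. -/
def KPositive {A B : Type*} [NonUnitalRing A] [StarRing A] [Module ℂ A]
    [NonUnitalRing B] [StarRing B] [Module ℂ B] (k : ℕ) (φ : A →ₗ[ℂ] B) : Prop :=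
  ∀ x : Matrix (Fin k) (Fin k) A, IsPosElem x → IsPosElem (x.map φ)

/-- A linear map is completely positive if it is `k`-positive for all `k`. -/
def CompletelyPositive {A B : Type*} [NonUnitalRing A] [StarRing A] [Module ℂ A]
    [NonUnitalRing B] [StarRing B] [Module ℂ B] (φ : A →ₗ[ℂ] B) : Prop :=
  ∀ k : ℕ, KPositive k φ

open MulOpposite in
/-- Key step: if the op map is `3`-positive, then for every `a` the commutator
`star a * a - a * star a` is a sum of three elements of the form `w * star w`. -/
lemma stmt18_aux_sub_pos (A : Type) [CStarAlgebra A]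
    (h : KPositive 3 ((MulOpposite.opLinearEquiv ℂ (M := A)).toLinearMap)) (a : A) :
    ∃ w : Fin 3 → A, star a * a - a * star a = ∑ k, w k * star (w k) := by
  let r : Fin 3 → A := ![1, a, 0]
  let b : Matrix (Fin 3) (Fin 3) A := Matrix.of fun i j => if i = 0 then r j else 0
  obtain ⟨c, hc⟩ := h (star b * b) ⟨b, rfl⟩
  let d : Fin 3 → Fin 3 → A := fun k i => unop (c k i)
  have entry : ∀ i j, star (r i) * r j = ∑ k, d k j * star (d k i) := by
    intro i j
    have h1 := congrFun (congrFun hc i) j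
    simp only [Matrix.map_apply, Matrix.mul_apply, Matrix.star_apply,
      LinearEquiv.coe_toLinearMap, coe_opLinearEquiv] at h1
    have h2 := congrArg unop h1
    simp only [Finset.unop_sum, unop_mul, unop_star, unop_op] at h2
    rw [← h2]
    simp [b, Fin.sum_univ_three]
  have e00 := entry 0 0
  have e01 := entry 0 1
  have e10 := entry 1 0
  have e11 := entry 1 1
  simp only [r, Matrix.cons_val_zero, Matrix.cons_val_one, Matrix.head_cons,
    star_one, one_mul, mul_one] at e00 e01 e10 e11
  refine ⟨fun k => d k 1 - a * d k 0, ?_⟩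
  have expand : ∀ k, (d k 1 - a * d k 0) * star (d k 1 - a * d k 0)
      = d k 1 * star (d k 1) - (d k 1 * star (d k 0)) * star a
        - a * (d k 0 * star (d k 1)) + a * ((d k 0 * star (d k 0)) * star a) := by
    intro k
    simp only [star_sub, star_mul]
    noncomm_ring
  rw [Finset.sum_congr rfl fun k _ => expand k]
  rw [Finset.sum_add_distrib, Finset.sum_sub_distrib, Finset.sum_sub_distrib]
  simp only [← Finset.sum_mul, ← Finset.mul_sum]
  rw [← e00, ← e01, ← e10, ← e11]
  noncomm_ring

open ComplexStarModule in
/-- Let `A` be a unital C*-algebra and suppose the canonical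
anti-homomorphism `ι : A → A^op` (the identity map into the opposite algebra) is
completely positive — equivalently (and as assumed here, sufficiently) `3`-positive.
Then `A` is abelian. -/
theorem stmt18 (A : Type) [CStarAlgebra A]
    (h : KPositive 3 ((MulOpposite.opLinearEquiv ℂ (M := A)).toLinearMap)) :
    ∀ x y : A, x * y = y * x := by
  letI := CStarAlgebra.spectralOrder A
  haveI := CStarAlgebra.spectralOrderedRing A
  have normal : ∀ a : A, star a * a = a * star a := by
    have key : ∀ a : A, 0 ≤ star a * a - a * star a := by
      intro a
      obtain ⟨w, hw⟩ := stmt18_aux_sub_pos A h a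
      rw [hw]
      exact Finset.sum_nonneg fun k _ => mul_star_self_nonneg (w k)
    intro a
    have h1 := key a
    have h2 := key (star a)
    rw [star_star] at h2
    exact le_antisymm (sub_nonneg.mp h2) (sub_nonneg.mp h1)
  have comm_sa : ∀ x y : A, star x = x → star y = y → x * y = y * x := by
    intro x y hx hy
    have h1 := normal (x + Complex.I • y)
    simp only [star_add, star_smul, Complex.star_def, Complex.conj_I, hx, hy, neg_smul,
      mul_add, add_mul, smul_mul_assoc, mul_smul_comm, smul_smul, smul_add, neg_mul, mul_neg,
      smul_neg, neg_neg] at h1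
    have h3 : (2 * Complex.I) • (x * y - y * x) = 0 := by
      rw [← sub_eq_zero] at h1
      linear_combination (norm := module) h1
    have h2 : x * y - y * x = 0 := by
      simpa [Complex.I_ne_zero, sub_eq_zero] using h3
    rw [← sub_eq_zero]
    exact h2
  intro x y
  rw [← realPart_add_I_smul_imaginaryPart x, ← realPart_add_I_smul_imaginaryPart y]
  simp only [add_mul, mul_add, smul_mul_assoc, mul_smul_comm, smul_smul, smul_add]
  rw [comm_sa _ _ (ℜ x).2.star_eq (ℜ y).2.star_eq, comm_sa _ _ (ℜ x).2.star_eq (ℑ y).2.star_eq,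
    comm_sa _ _ (ℑ x).2.star_eq (ℜ y).2.star_eq, comm_sa _ _ (ℑ x).2.star_eq (ℑ y).2.star_eq]
  abel

end
end
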